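/- In the algebraic noncommutative torus A_θ with the para-Hopf algebroid structure over ℂ[U,U⁻¹] (Δ(UⁿVᵐ) = UⁿVᵐ⊗_R Vᵐ, T(UⁿVᵐ) = q^{nm}UⁿV^{−m}), the Connes–Moscovici cyclic operator τ₂ on A_θ⊗_R A_θ, defined by τ₂(h₁⊗_R h₂) = Δ(T(h₁))·(h₂⊗1), satisfies τ₂³(1⊗_R U) = 1⊗_R U and τ₂³(1⊗_R V) = 1⊗_R V. -/

import Mathlib

open TensorProduct

noncomputable section

/-- The data of a (pre-)bialgebroid: total algebra `H`, base algebra `R`,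
source map `α` (algebra map), target map `β` (anti-algebra map), a linear lift
`Δ : H → H ⊗[k] H` of the coproduct, and the counit `ε`. -/
structure PreBialgebroid (k H R : Type) [Field k] [Ring H] [Algebra k H]
    [Ring R] [Algebra k R] where
  α : R →ₐ[k] H
  β : R →ₗ[k] H
  β_one : β 1 = 1
  β_mul : ∀ a b : R, β (a * b) = β b * β a
  αβ_comm : ∀ a b : R, α a * β b = β b * α a
  Δ : H →ₗ[k] H ⊗[k] H
  ε : H →ₗ[k] R

namespace PreBialgebroid

variable {k H R : Type} [Field k] [Ring H] [Algebra k H] [Ring R] [Algebra k R]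
variable (D : PreBialgebroid k H R)

/-- The submodule of `H ⊗[k] H` by which one divides to obtain `H ⊗_R H`. -/
def rel2 : Submodule k (H ⊗[k] H) :=
  Submodule.span k {z | ∃ (r : R) (x y : H), z = (D.β r * x) ⊗ₜ[k] y - x ⊗ₜ[k] (D.α r * y)}

/-- The projection `H ⊗[k] H → H ⊗_R H`. -/
def π2 : H ⊗[k] H →ₗ[k] (H ⊗[k] H) ⧸ D.rel2 := D.rel2.mkQ

/-- Relations for the triple tensor product `H ⊗_R H ⊗_R H` (right associated). -/
def rel3 : Submodule k (H ⊗[k] (H ⊗[k] H)) :=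
  Submodule.span k {z |
    (∃ (r : R) (x y w : H), z = (D.β r * x) ⊗ₜ[k] (y ⊗ₜ[k] w) - x ⊗ₜ[k] ((D.α r * y) ⊗ₜ[k] w)) ∨
    (∃ (r : R) (x y w : H), z = x ⊗ₜ[k] ((D.β r * y) ⊗ₜ[k] w) - x ⊗ₜ[k] (y ⊗ₜ[k] (D.α r * w)))}

def π3 : H ⊗[k] (H ⊗[k] H) →ₗ[k] (H ⊗[k] (H ⊗[k] H)) ⧸ D.rel3 := D.rel3.mkQ

/-- For a linear map `f : H → H`, the map `x ⊗ y ↦ f x * y`. -/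
def mulL (f : H →ₗ[k] H) : H ⊗[k] H →ₗ[k] H :=
  TensorProduct.lift
    (LinearMap.mk₂ k (fun x y => f x * y)
      (by intro x x' y; simp [map_add, add_mul])
      (by intro c x y; simp [map_smul, smul_mul_assoc])
      (by intro x y y'; simp [mul_add])
      (by intro c x y; simp [mul_smul_comm]))

/-- For a linear map `f : H → H`, the map `x ⊗ y ↦ f y * x`. -/
def mulR (f : H →ₗ[k] H) : H ⊗[k] H →ₗ[k] H :=
  TensorProduct.lift
    (LinearMap.mk₂ k (fun x y => f y * x)
      (by intro x x' y; simp [mul_add])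
      (by intro c x y; simp [mul_smul_comm])
      (by intro x y y'; simp [map_add, add_mul])
      (by intro c x y; simp [map_smul, smul_mul_assoc]))

/-- The (lift of the) Connes–Moscovici cyclic operator in degree 2:
`x ⊗ y ↦ Δ(T x) · (y ⊗ 1)`. -/
def tau2 (T : H →ₗ[k] H) : H ⊗[k] H →ₗ[k] H ⊗[k] H :=
  TensorProduct.lift
    (LinearMap.mk₂ k (fun x y => D.Δ (T x) * (y ⊗ₜ[k] (1 : H)))
      (by intro x x' y; simp [map_add, add_mul])
      (by intro c x y; simp [map_smul, smul_mul_assoc])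
      (by intro x y y'; simp [add_tmul, mul_add])
      (by intro c x y; simp [← TensorProduct.smul_tmul', mul_smul_comm]))

/-- The bialgebroid axioms, stated for the chosen linear lift `Δ` of the coproduct
modulo the relations defining `H ⊗_R H`. -/
structure IsBialgebroid : Prop where
  Δ_one : D.π2 (D.Δ 1) = D.π2 ((1 : H) ⊗ₜ[k] (1 : H))
  coassoc : ∀ h : H,
    D.π3 ((TensorProduct.assoc k H H H) ((D.Δ.rTensor H) (D.Δ h))) =
      D.π3 ((D.Δ.lTensor H) (D.Δ h))
  Δ_cp3 : ∀ (h : H) (r : R),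
    D.π2 (D.Δ h * (D.β r ⊗ₜ[k] (1 : H) - (1 : H) ⊗ₜ[k] D.α r)) = 0
  Δ_mul : ∀ a b : H, D.π2 (D.Δ (a * b)) = D.π2 (D.Δ a * D.Δ b)
  Δ_left : ∀ (r : R) (h : H),
    D.π2 (D.Δ (D.α r * h)) = D.π2 ((D.α r ⊗ₜ[k] (1 : H)) * D.Δ h)
  Δ_right : ∀ (r : R) (h : H),
    D.π2 (D.Δ (D.β r * h)) = D.π2 (((1 : H) ⊗ₜ[k] D.β r) * D.Δ h)
  ε_one : D.ε 1 = 1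
  ε_left : ∀ (r : R) (h : H), D.ε (D.α r * h) = r * D.ε h
  ε_right : ∀ (r : R) (h : H), D.ε (D.β r * h) = D.ε h * r
  counit_l : ∀ h : H, mulL (D.α.toLinearMap ∘ₗ D.ε) (D.Δ h) = h
  counit_r : ∀ h : H, mulR (D.β ∘ₗ D.ε) (D.Δ h) = h

/-- The para-Hopf algebroid axioms for a para-antipode `T`. -/
structure IsParaHopf (T : H →ₗ[k] H) : Prop where
  bialgebroid : D.IsBialgebroid
  T_one : T 1 = 1
  T_antimul : ∀ a b : H, T (a * b) = T b * T a
  PH1 : ∀ r : R, T (D.β r) = D.α r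
  PH2 : ∀ h : H, mulL T (D.Δ h) = D.β (D.ε (T h))
  T_invol : ∀ h : H, T (T h) = h
  PH3 : ∀ h : H, D.π2 (tau2 D T (D.Δ h)) = D.π2 ((1 : H) ⊗ₜ[k] T h)

end PreBialgebroid

section NCtorus

/-- Hypotheses saying that `A` is the algebraic noncommutative torus `A_θ`: it is
generated by invertible elements `U`, `V` with `UV = qVU`, `q = e^{2πiθ}`, and the
monomials `UⁿVᵐ` form a basis. -/
def IsNCTorus {A : Type} [Ring A] [Algebra ℂ A] (θ : ℝ) (UU VV : Aˣ)
    (b : Module.Basis (ℤ × ℤ) ℂ A) : Prop :=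
  ((UU : A) * VV = Complex.exp (2 * Real.pi * Complex.I * θ) • ((VV : A) * UU)) ∧
  (∀ n m : ℤ, b (n, m) = ((UU ^ n : Aˣ) : A) * ((VV ^ m : Aˣ) : A))

/-- The Laurent polynomial subalgebra `ℂ[U, U⁻¹]` of the noncommutative torus. -/
def laurentSub {A : Type} [Ring A] [Algebra ℂ A] (UU : Aˣ) : Subalgebra ℂ A :=
  Algebra.adjoin ℂ {(UU : A), ((UU⁻¹ : Aˣ) : A)}

end NCtorus

/-- for the noncommutative torus para-Hopf algebroid, the cyclic operator
`τ₂(h₁ ⊗_R h₂) = Δ(T h₁)·(h₂ ⊗ 1)` on `A_θ ⊗_R A_θ` satisfies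
`τ₂³(1 ⊗_R U) = 1 ⊗_R U` and `τ₂³(1 ⊗_R V) = 1 ⊗_R V`. -/
theorem ncTorus_tau2_cubed {A : Type} [Ring A] [Algebra ℂ A] (θ : ℝ)
    (UU VV : Aˣ) (b : Module.Basis (ℤ × ℤ) ℂ A) (htorus : IsNCTorus θ UU VV b)
    (D : PreBialgebroid ℂ A (laurentSub UU)) (T : A →ₗ[ℂ] A)
    (hD : D.IsParaHopf T)
    (hα : D.α = (laurentSub UU).val)
    (hβ : D.β = (laurentSub UU).val.toLinearMap)
    (hΔ : ∀ n m : ℤ, D.π2 (D.Δ (b (n, m))) = D.π2 (b (n, m) ⊗ₜ[ℂ] b (0, m)))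
    (hε : ∀ n m : ℤ, (D.ε (b (n, m)) : A) = b (n, 0))
    (hT : ∀ n m : ℤ,
      T (b (n, m)) = (Complex.exp (2 * Real.pi * Complex.I * θ) ^ (n * m)) • b (n, -m))
    -- `tau` is the induced cyclic operator on the quotient `A ⊗_R A`:
    (tau : ((A ⊗[ℂ] A) ⧸ D.rel2) →ₗ[ℂ] ((A ⊗[ℂ] A) ⧸ D.rel2))
    (htau : tau ∘ₗ D.π2 = D.π2 ∘ₗ PreBialgebroid.tau2 D T) :
    tau (tau (tau (D.π2 ((1 : A) ⊗ₜ[ℂ] (UU : A))))) = D.π2 ((1 : A) ⊗ₜ[ℂ] (UU : A)) ∧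
    tau (tau (tau (D.π2 ((1 : A) ⊗ₜ[ℂ] (VV : A))))) = D.π2 ((1 : A) ⊗ₜ[ℂ] (VV : A)) := by
  have hb := htorus.2
  have hb00 : b (0, 0) = 1 := by rw [hb]; simp
  have hb10 : b (1, 0) = (UU : A) := by rw [hb]; simp
  have hb01 : b (0, 1) = (VV : A) := by rw [hb]; simp
  have hbV : b (0, 1) * b (0, -1) = 1 := by
    rw [hb, hb]; simp [← Units.val_mul]
  have hb0 : b 0 = 1 := hb00
  have hbV' : (VV : A) * b (0, -1) = 1 := by rw [← hb01]; exact hbV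
  -- rel2 is closed under right multiplication
  have hmul : ∀ (w : A ⊗[ℂ] A), ∀ z ∈ D.rel2, z * w ∈ D.rel2 := by
    intro w z hz
    induction hz using Submodule.span_induction with
    | mem z hz =>
      obtain ⟨r, x, y, rfl⟩ := hz
      induction w using TensorProduct.induction_on with
      | zero => simp
      | tmul a c =>
        rw [sub_mul, Algebra.TensorProduct.tmul_mul_tmul,
          Algebra.TensorProduct.tmul_mul_tmul]
        apply Submodule.subset_span
        exact ⟨r, x * a, y * c, by rw [mul_assoc, mul_assoc]⟩
      | add u v hu hv => rw [mul_add]; exact add_mem hu hv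
    | zero => simp
    | add u v _ _ hu hv => rw [add_mul]; exact add_mem hu hv
    | smul c u _ hu => rw [smul_mul_assoc]; exact Submodule.smul_mem _ _ hu
  have hcongr : ∀ (w a c : A ⊗[ℂ] A), D.π2 a = D.π2 c → D.π2 (a * w) = D.π2 (c * w) := by
    intro w a c h
    have h1 : a - c ∈ D.rel2 := by
      rwa [PreBialgebroid.π2, Submodule.mkQ_apply, Submodule.mkQ_apply,
        Submodule.Quotient.eq] at h
    have h2 : a * w - c * w ∈ D.rel2 := by
      rw [← sub_mul]; exact hmul w _ h1
    rw [PreBialgebroid.π2, Submodule.mkQ_apply, Submodule.mkQ_apply,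
      Submodule.Quotient.eq]
    exact h2
  -- the basic computation of tau on a pure tensor with monomial first factor
  have hstep : ∀ (n m : ℤ) (y : A),
      tau (D.π2 (b (n, m) ⊗ₜ[ℂ] y)) =
        (Complex.exp (2 * Real.pi * Complex.I * θ) ^ (n * m)) •
          D.π2 ((b (n, -m) * y) ⊗ₜ[ℂ] b (0, -m)) := by
    intro n m y
    have h1 : tau (D.π2 (b (n, m) ⊗ₜ[ℂ] y)) =
        D.π2 (PreBialgebroid.tau2 D T (b (n, m) ⊗ₜ[ℂ] y)) := by
      have := LinearMap.congr_fun htau (b (n, m) ⊗ₜ[ℂ] y)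
      simpa using this
    have h2 : PreBialgebroid.tau2 D T (b (n, m) ⊗ₜ[ℂ] y) =
        D.Δ (T (b (n, m))) * (y ⊗ₜ[ℂ] (1 : A)) := by
      simp [PreBialgebroid.tau2]
    rw [h1, h2, hT, map_smul, smul_mul_assoc, map_smul]
    congr 1
    rw [hcongr (y ⊗ₜ[ℂ] (1 : A)) _ _ (hΔ n (-m)),
      Algebra.TensorProduct.tmul_mul_tmul, mul_one]
  -- swap lemma: π2 (U ⊗ 1) = π2 (1 ⊗ U)
  have hUmem : (UU : A) ∈ laurentSub UU :=
    Algebra.subset_adjoin (Set.mem_insert _ _)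
  have hswap : D.π2 ((UU : A) ⊗ₜ[ℂ] (1 : A)) = D.π2 ((1 : A) ⊗ₜ[ℂ] (UU : A)) := by
    rw [PreBialgebroid.π2, Submodule.mkQ_apply, Submodule.mkQ_apply,
      Submodule.Quotient.eq]
    apply Submodule.subset_span
    refine ⟨⟨(UU : A), hUmem⟩, 1, 1, ?_⟩
    simp [hα, hβ]
  constructor
  · have s1 : tau (D.π2 ((1 : A) ⊗ₜ[ℂ] (UU : A))) = D.π2 ((UU : A) ⊗ₜ[ℂ] (1 : A)) := by
      rw [← hb00, hstep]
      simp [hb00, hb0]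
    have s2 : tau (D.π2 ((UU : A) ⊗ₜ[ℂ] (1 : A))) = D.π2 ((UU : A) ⊗ₜ[ℂ] (1 : A)) := by
      conv_lhs => rw [← hb10]
      rw [hstep]
      simp [hb00, hb10, hb0]
    rw [s1, s2, s2, hswap]
  · have t1 : tau (D.π2 ((1 : A) ⊗ₜ[ℂ] (VV : A))) = D.π2 ((VV : A) ⊗ₜ[ℂ] (1 : A)) := by
      rw [← hb00, hstep]
      simp [hb00, hb0]
    have t2 : tau (D.π2 ((VV : A) ⊗ₜ[ℂ] (1 : A))) =
        D.π2 (b (0, -1) ⊗ₜ[ℂ] b (0, -1)) := by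
      conv_lhs => rw [← hb01]
      rw [hstep]
      simp
    have t3 : tau (D.π2 (b (0, -1) ⊗ₜ[ℂ] b (0, -1))) =
        D.π2 ((1 : A) ⊗ₜ[ℂ] (VV : A)) := by
      rw [hstep]
      simp [hbV', hb01]
    rw [t1, t2, t3]
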